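/- Let a, b : ℕ → ℕ satisfy 1 ≤ a_n ≤ b_n < a_{n+1} and b_n − a_n > n·a_n for all n, and for W ⊆ ℕ set I_W = ⋃_{n∈W} [a_n, b_n] (intervals of integers). If W and W′ are infinite subsets of ℕ with W ∩ W′ finite and W ≠ W′, then I_W and I_{W′} are not coarsely equivalent as subsets of ℕ with the metric d(x,y) = |x − y|. -/

import Mathlib

/-- `Y` is a large subset of `X ⊆ ℕ` with respect to the metric `|x - y|`. -/
def NatLargeIn (Y X : Set ℕ) : Prop :=
  Y ⊆ X ∧ ∃ r : ℕ, ∀ x ∈ X, ∃ y ∈ Y, Nat.dist x y ≤ r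

/-- A bijection `f : X ≃ X'` between subsets of `ℕ` (with the metric `|x - y|`)
is an asymorphism if it is coarse in both directions. -/
def NatIsAsymorphism (X X' : Set ℕ) (f : X ≃ X') : Prop :=
  (∀ r : ℕ, ∃ t : ℕ, ∀ x y : X,
      Nat.dist (x : ℕ) (y : ℕ) ≤ r → Nat.dist (f x : ℕ) (f y : ℕ) ≤ t) ∧
  (∀ r : ℕ, ∃ t : ℕ, ∀ x y : X',
      Nat.dist (x : ℕ) (y : ℕ) ≤ r → Nat.dist (f.symm x : ℕ) (f.symm y : ℕ) ≤ t)

/-- Subsets `X, X'` of `ℕ` are coarsely equivalent if some large subsets of each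
are asymorphic. -/
def NatCoarselyEquiv (X X' : Set ℕ) : Prop :=
  ∃ Y Y' : Set ℕ, NatLargeIn Y X ∧ NatLargeIn Y' X' ∧ ∃ f : Y ≃ Y', NatIsAsymorphism Y Y' f

/- ### Auxiliary lemmas -/

/-- Chain connectivity: in a `ρ`-dense subset `Z` of `X ⊇ [A,B]`, any two points of
`Z ∩ [A,B]` with `w ≤ w'` are connected by steps of size `≤ 2ρ+1` staying in `Z ∩ [A,B]`. -/
lemma nat_chain_up {X Z : Set ℕ} {ρ A B : ℕ}
    (hsub : Set.Icc A B ⊆ X)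
    (hdense : ∀ x ∈ X, ∃ z ∈ Z, Nat.dist x z ≤ ρ) :
    ∀ w' w, w ∈ Z → A ≤ w → w ≤ B → w' ∈ Z → A ≤ w' → w' ≤ B → w ≤ w' →
    Relation.ReflTransGen
      (fun u v => (u ∈ Z ∧ A ≤ u ∧ u ≤ B) ∧ (v ∈ Z ∧ A ≤ v ∧ v ≤ B) ∧ Nat.dist u v ≤ 2*ρ+1)
      w w' := by
  intro w'
  induction w' using Nat.strong_induction_on with
  | _ w' ih =>
    intro w hwZ hwA hwB hw'Z hw'A hw'B hle
    by_cases hclose : w' ≤ w + (2*ρ+1)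
    · exact Relation.ReflTransGen.single
        ⟨⟨hwZ, hwA, hwB⟩, ⟨hw'Z, hw'A, hw'B⟩, by simp [Nat.dist]; omega⟩
    · push_neg at hclose
      have hx : w' - (ρ+1) ∈ Set.Icc A B := by constructor <;> omega
      obtain ⟨z, hzZ, hzd⟩ := hdense _ (hsub hx)
      simp only [Nat.dist] at hzd
      have h1 : z < w' := by omega
      have h2 : w ≤ z := by omega
      have hzA : A ≤ z := by omega
      have hzB : z ≤ B := by omega
      exact (ih z h1 w hwZ hwA hwB hzZ hzA hzB h2).tail
        ⟨⟨hzZ, hzA, hzB⟩, ⟨hw'Z, hw'A, hw'B⟩, by simp [Nat.dist]; omega⟩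

/-- Density count: a `ρ`-dense subset `Z` of `X ⊇ [A,B]` has many points in `[A,B]`. -/
lemma nat_count_lemma {X Z : Set ℕ} {ρ A B : ℕ} [DecidablePred (· ∈ Z)]
    (hsub : Set.Icc A B ⊆ X)
    (hdense : ∀ x ∈ X, ∃ z ∈ Z, Nat.dist x z ≤ ρ) :
    B + 1 ≤ A + 2*ρ + (2*ρ+1) * ((Finset.Icc A B).filter (fun x => x ∈ Z)).card := by
  classical
  by_cases htriv : B + 1 ≤ A + 2*ρ
  · exact htriv.trans (Nat.le_add_right _ _)
  push_neg at htriv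
  have hBA : A + 2*ρ ≤ B := by omega
  set s : Finset ℕ := Finset.Icc (A + ρ) (B - ρ) with hs
  have hch : ∀ x ∈ s, ∃ z, z ∈ Z ∧ A ≤ z ∧ z ≤ B ∧ Nat.dist x z ≤ ρ := by
    intro x hx
    simp only [hs, Finset.mem_Icc] at hx
    have hxI : x ∈ Set.Icc A B := by constructor <;> omega
    obtain ⟨z, hzZ, hzd⟩ := hdense _ (hsub hxI)
    simp only [Nat.dist] at hzd
    exact ⟨z, hzZ, by omega, by omega, by simp [Nat.dist]; omega⟩
  set c : ℕ → ℕ := fun x =>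
    if h : ∃ z, z ∈ Z ∧ A ≤ z ∧ z ≤ B ∧ Nat.dist x z ≤ ρ then h.choose else 0 with hc
  have hcspec : ∀ x ∈ s, c x ∈ Z ∧ A ≤ c x ∧ c x ≤ B ∧ Nat.dist x (c x) ≤ ρ := by
    intro x hx
    have h := hch x hx
    simp only [hc, dif_pos h]
    exact h.choose_spec
  have hmain : s.card ≤ (2*ρ+1) * (s.image c).card := by
    apply Finset.card_le_mul_card_image
    intro y hy
    have hsubf : s.filter (fun x => c x = y) ⊆ Finset.Icc (y - ρ) (y + ρ) := by
      intro x hx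
      simp only [Finset.mem_filter] at hx
      obtain ⟨hxs, hcx⟩ := hx
      have := (hcspec x hxs).2.2.2
      rw [hcx] at this
      simp only [Nat.dist] at this
      simp only [Finset.mem_Icc]
      omega
    calc (s.filter (fun x => c x = y)).card ≤ (Finset.Icc (y - ρ) (y + ρ)).card :=
          Finset.card_le_card hsubf
      _ ≤ 2*ρ+1 := by rw [Nat.card_Icc]; omega
  have himg : s.image c ⊆ (Finset.Icc A B).filter (fun x => x ∈ Z) := by
    intro y hy
    obtain ⟨x, hxs, hxy⟩ := Finset.mem_image.1 hy
    obtain ⟨h1, h2, h3, _⟩ := hcspec x hxs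
    rw [hxy] at h1 h2 h3
    simp only [Finset.mem_filter, Finset.mem_Icc]
    exact ⟨⟨h2, h3⟩, h1⟩
  have hcard2 : (s.image c).card ≤ ((Finset.Icc A B).filter (fun x => x ∈ Z)).card :=
    Finset.card_le_card himg
  have hscard : s.card = B - ρ + 1 - (A + ρ) := by rw [hs, Nat.card_Icc]
  have h4 : (2*ρ+1) * (s.image c).card ≤
      (2*ρ+1) * ((Finset.Icc A B).filter (fun x => x ∈ Z)).card :=
    Nat.mul_le_mul_left _ hcard2
  have h5 : s.card ≤ (2*ρ+1) * ((Finset.Icc A B).filter (fun x => x ∈ Z)).card :=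
    hmain.trans h4
  set Q := (2*ρ+1) * ((Finset.Icc A B).filter (fun x => x ∈ Z)).card with hQ
  omega

section main
variable {a b : ℕ → ℕ}

lemma nat_aux_amono (hab : ∀ n, a n ≤ b n) (hba : ∀ n, b n < a (n + 1)) :
    StrictMono a :=
  strictMono_nat_of_lt_succ (fun n => lt_of_le_of_lt (hab n) (hba n))

lemma nat_aux_blt (hab : ∀ n, a n ≤ b n) (hba : ∀ n, b n < a (n + 1))
    {j k : ℕ} (hjk : j < k) : b j < a k :=
  lt_of_lt_of_le (hba j) ((nat_aux_amono hab hba).monotone hjk)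

lemma nat_aux_grow (ha : ∀ n, 1 ≤ a n) (hab : ∀ n, a n ≤ b n)
    (hgrow : ∀ n, b n - a n > n * a n) (n : ℕ) :
    n * a n + a n < b n ∧ n ≤ n * a n := by
  have h1 := hgrow n
  have h2 := hab n
  have h3 : n ≤ n * a n := Nat.le_mul_of_pos_right n (ha n)
  generalize n * a n = t at h1 h3 ⊢
  omega

/-- Crossing a missing interval costs more than `V`. -/
lemma nat_cut_lemma (ha : ∀ n, 1 ≤ a n) (hab : ∀ n, a n ≤ b n)
    (hba : ∀ n, b n < a (n + 1)) (hgrow : ∀ n, b n - a n > n * a n)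
    {W : Set ℕ} {p V z z' : ℕ} (hp : p ∉ W) (hVp : V < p)
    (hz' : z' ∈ ⋃ m ∈ W, Set.Icc (a m) (b m))
    (hzlt : z < a p) (hd : Nat.dist z z' ≤ V) : z' < a p := by
  by_contra hge
  push_neg at hge
  simp only [Set.mem_iUnion, Set.mem_Icc] at hz'
  obtain ⟨k, hkW, hk1, hk2⟩ := hz'
  have hkp : p < k := by
    rcases lt_trichotomy k p with h | h | h
    · have := nat_aux_blt hab hba h
      omega
    · exact absurd (h ▸ hkW) hp
    · exact h
  have h1 : a (p+1) ≤ a k := (nat_aux_amono hab hba).monotone hkp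
  have h2 : b p < a (p+1) := hba p
  have ⟨h3, h4⟩ := nat_aux_grow ha hab hgrow p
  simp only [Nat.dist] at hd
  generalize p * a p = t at h3 h4
  omega

end main

theorem interval_unions_not_coarsely_equiv
    (a b : ℕ → ℕ)
    (ha : ∀ n, 1 ≤ a n) (hab : ∀ n, a n ≤ b n) (hba : ∀ n, b n < a (n + 1))
    (hgrow : ∀ n, b n - a n > n * a n)
    (W W' : Set ℕ) (hW : W.Infinite) (hW' : W'.Infinite)
    (had : (W ∩ W').Finite) (hne : W ≠ W') :
    ¬ NatCoarselyEquiv (⋃ n ∈ W, Set.Icc (a n) (b n)) (⋃ n ∈ W', Set.Icc (a n) (b n)) := by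
  classical
  rintro ⟨Y, Y', ⟨hYsub, r, hYd⟩, ⟨hY'sub, r', hY'd⟩, f, hf1, hf2⟩
  obtain ⟨V, hV⟩ := hf2 (2*r'+1)
  -- the underlying maps on ℕ
  set F : ℕ → ℕ := fun x => if h : x ∈ Y then (f ⟨x, h⟩ : ℕ) else 0 with hFdef
  set G' : ℕ → ℕ := fun x => if h : x ∈ Y' then (f.symm ⟨x, h⟩ : ℕ) else 0 with hG'def
  have hFmem : ∀ x (hx : x ∈ Y), F x ∈ Y' := by
    intro x hx
    simp only [hFdef, dif_pos hx]
    exact (f ⟨x, hx⟩).2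
  have hG'mem : ∀ x (hx : x ∈ Y'), G' x ∈ Y := by
    intro x hx
    simp only [hG'def, dif_pos hx]
    exact (f.symm ⟨x, hx⟩).2
  have hGF : ∀ x (hx : x ∈ Y), G' (F x) = x := by
    intro x hx
    have h1 : F x = (f ⟨x, hx⟩ : ℕ) := dif_pos hx
    have h2 : F x ∈ Y' := hFmem x hx
    rw [show G' (F x) = ((f.symm ⟨F x, h2⟩ : Y) : ℕ) from dif_pos h2]
    have h3 : (⟨F x, h2⟩ : Y') = f ⟨x, hx⟩ := Subtype.ext h1
    rw [h3, Equiv.symm_apply_apply]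
  have hFG : ∀ x (hx : x ∈ Y'), F (G' x) = x := by
    intro x hx
    have h1 : G' x = (f.symm ⟨x, hx⟩ : ℕ) := dif_pos hx
    have h2 : G' x ∈ Y := hG'mem x hx
    rw [show F (G' x) = ((f ⟨G' x, h2⟩ : Y') : ℕ) from dif_pos h2]
    have h3 : (⟨G' x, h2⟩ : Y) = f.symm ⟨x, hx⟩ := Subtype.ext h1
    rw [h3, Equiv.apply_symm_apply]
  have hFinj : Set.InjOn F Y := fun x hx y hy h => by
    rw [← hGF x hx, ← hGF y hy, h]
  have hG'inj : Set.InjOn G' Y' := fun x hx y hy h => by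
    rw [← hFG x hx, ← hFG y hy, h]
  have hVd : ∀ u v, u ∈ Y' → v ∈ Y' → Nat.dist u v ≤ 2*r'+1 →
      Nat.dist (G' u) (G' v) ≤ V := by
    intro u v hu hv hd
    have := hV ⟨u, hu⟩ ⟨v, hv⟩ hd
    simpa [hG'def, dif_pos hu, dif_pos hv] using this
  -- bound for W ∩ W'
  obtain ⟨c₀, hc₀⟩ := had.bddAbove
  -- choose a huge n ∈ W \ W'
  have hWd : (W \ W').Infinite := by
    have he : W \ W' = W \ (W ∩ W') := by
      ext x; simp only [Set.mem_diff, Set.mem_inter_iff]; tauto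
    rw [he]; exact hW.diff had
  set N₀ : ℕ := c₀ + V + 4*r + 4*r' + 10 with hN₀
  obtain ⟨n, hnmem, hnN⟩ := hWd.exists_gt N₀
  obtain ⟨hnW, hnW'⟩ := hnmem
  -- choose p : least missing index of W above n
  have hWc : (W' \ W).Infinite := by
    have he : W' \ W = W' \ (W ∩ W') := by
      ext x; simp only [Set.mem_diff, Set.mem_inter_iff]; tauto
    rw [he]; exact hW'.diff had
  have hPne : {k | n < k ∧ k ∉ W}.Nonempty := by
    obtain ⟨k, hk, hkn⟩ := hWc.exists_gt n
    exact ⟨k, hkn, hk.2⟩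
  set p := sInf {k | n < k ∧ k ∉ W} with hpdef
  have hpP := Nat.sInf_mem hPne
  have hpn : n < p := hpP.1
  have hpW : p ∉ W := hpP.2
  have hpmin : ∀ k, n < k → k < p → k ∈ W := by
    intro k h1 h2
    by_contra hk
    have hle : sInf {k | n < k ∧ k ∉ W} ≤ k :=
      Nat.sInf_le (show k ∈ {k | n < k ∧ k ∉ W} from ⟨h1, hk⟩)
    rw [← hpdef] at hle
    omega
  -- a point of Y in I_n
  have hbn : a n + 2*r + 1 ≤ b n := by
    have ⟨h1, h2⟩ := nat_aux_grow ha hab hgrow n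
    generalize n * a n = t at h1 h2
    omega
  have hxX : a n + r ∈ ⋃ m ∈ W, Set.Icc (a m) (b m) := by
    simp only [Set.mem_iUnion, Set.mem_Icc]
    exact ⟨n, hnW, by omega, by omega⟩
  obtain ⟨y₀, hy₀Y, hy₀d⟩ := hYd _ hxX
  have hy₀I : a n ≤ y₀ ∧ y₀ ≤ b n := by
    simp only [Nat.dist] at hy₀d; omega
  -- the finset Y ∩ I_n and its image
  set YIn : Finset ℕ := (Finset.Icc (a n) (b n)).filter (fun x => x ∈ Y) with hYIn
  have hy₀In : y₀ ∈ YIn := by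
    simp only [hYIn, Finset.mem_filter, Finset.mem_Icc]
    exact ⟨⟨hy₀I.1, hy₀I.2⟩, hy₀Y⟩
  have hne' : (YIn.image F).Nonempty := ⟨F y₀, Finset.mem_image_of_mem F hy₀In⟩
  set G := (YIn.image F).max' hne' with hGdef
  have hGim : G ∈ YIn.image F := Finset.max'_mem _ hne'
  obtain ⟨yG, hyGIn, hyG⟩ := Finset.mem_image.1 hGim
  have hyGY : yG ∈ Y := (Finset.mem_filter.1 hyGIn).2
  have hyGI : a n ≤ yG ∧ yG ≤ b n := by
    have := (Finset.mem_filter.1 hyGIn).1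
    simpa [Finset.mem_Icc] using this
  have hGY' : G ∈ Y' := hyG ▸ hFmem yG hyGY
  -- the interval I_M containing G
  have hGX' : G ∈ ⋃ m ∈ W', Set.Icc (a m) (b m) := hY'sub hGY'
  obtain ⟨M, hMW', hM1, hM2⟩ := by
    simpa only [Set.mem_iUnion, Set.mem_Icc] using hGX'
  -- (A) density count in I_n
  have hsubn : Set.Icc (a n) (b n) ⊆ ⋃ m ∈ W, Set.Icc (a m) (b m) :=
    fun x hx => Set.mem_biUnion hnW hx
  have hA : b n + 1 ≤ a n + 2*r + (2*r+1) * YIn.card := nat_count_lemma hsubn hYd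
  -- card YIn ≤ G + 1
  have hcardim : YIn.card = (YIn.image F).card := by
    rw [Finset.card_image_of_injOn]
    intro x hx y hy hxy
    exact hFinj ((Finset.mem_filter.1 hx).2) ((Finset.mem_filter.1 hy).2) hxy
  have hcardG : YIn.card ≤ G + 1 := by
    rw [hcardim]
    calc (YIn.image F).card ≤ (Finset.Iic G).card := by
          apply Finset.card_le_card
          intro x hx
          simp only [Finset.mem_Iic]
          exact Finset.le_max' _ x hx
      _ = G + 1 := by rw [Nat.card_Iic]
  -- Key inequality (*): b n + 1 ≤ a n + 2r + (2r+1)(b M + 1)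
  have hstar : b n + 1 ≤ a n + 2*r + (2*r+1) * (b M + 1) := by
    have h1 : (2*r+1) * YIn.card ≤ (2*r+1) * (G + 1) := Nat.mul_le_mul_left _ hcardG
    have h2 : (2*r+1) * (G + 1) ≤ (2*r+1) * (b M + 1) :=
      Nat.mul_le_mul_left _ (by omega)
    omega
  -- (E) propagation: every point of Y' ∩ I_M pulls back below a p
  have hVp : V < p := by omega
  have hbase : G' G < a p := by
    rw [← hyG, hGF yG hyGY]
    have h1 : b n < a (n+1) := hba n
    have h2 : a (n+1) ≤ a p := (nat_aux_amono hab hba).monotone (by omega)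
    omega
  have hsubM : Set.Icc (a M) (b M) ⊆ ⋃ m ∈ W', Set.Icc (a m) (b m) :=
    fun x hx => Set.mem_biUnion hMW' hx
  set R : ℕ → ℕ → Prop := fun u v =>
    (u ∈ Y' ∧ a M ≤ u ∧ u ≤ b M) ∧ (v ∈ Y' ∧ a M ≤ v ∧ v ≤ b M) ∧ Nat.dist u v ≤ 2*r'+1
    with hRdef
  have hRsymm : Symmetric R := by
    intro u v ⟨h1, h2, h3⟩
    exact ⟨h2, h1, by rwa [Nat.dist_comm]⟩
  have hprop : ∀ w, Relation.ReflTransGen R G w → G' w < a p := by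
    intro w hw
    induction hw with
    | refl => exact hbase
    | tail _ hstep ih =>
      obtain ⟨⟨huY', _, _⟩, ⟨hvY', _, _⟩, hd⟩ := hstep
      have hdist := hVd _ _ huY' hvY' hd
      exact nat_cut_lemma ha hab hba hgrow hpW hVp
        (hYsub (hG'mem _ hvY')) ih hdist
  have hkey : ∀ w, w ∈ Y' → a M ≤ w → w ≤ b M → G' w < a p := by
    intro w hwY' hw1 hw2
    rcases le_total G w with hle | hle
    · exact hprop w (nat_chain_up hsubM hY'd w G hGY' hM1 hM2 hwY' hw1 hw2 hle)
    · have hrev : Relation.ReflTransGen R w G :=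
        nat_chain_up hsubM hY'd G w hwY' hw1 hw2 hGY' hM1 hM2 hle
      -- reverse the chain
      have : ∀ x y, Relation.ReflTransGen R x y → Relation.ReflTransGen R y x := by
        intro x y h
        induction h with
        | refl => exact Relation.ReflTransGen.refl
        | tail _ hstep ih => exact Relation.ReflTransGen.head (hRsymm hstep) ih
      exact hprop w (this w G hrev)
  -- (D) density count in I_M
  set Y'IM : Finset ℕ := (Finset.Icc (a M) (b M)).filter (fun x => x ∈ Y') with hY'IM
  have hD : b M + 1 ≤ a M + 2*r' + (2*r'+1) * Y'IM.card := nat_count_lemma hsubM hY'd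
  -- (E) card Y'IM ≤ a p
  have hE : Y'IM.card ≤ a p := by
    calc Y'IM.card ≤ (Finset.range (a p)).card := by
          apply Finset.card_le_card_of_injOn G'
          · intro w hw
            obtain ⟨hwI, hwY'⟩ := Finset.mem_filter.1 hw
            simp only [Finset.mem_Icc] at hwI
            refine Finset.mem_range.2 ?_
            exact hkey w hwY' hwI.1 hwI.2
          · intro x hx y hy hxy
            exact hG'inj ((Finset.mem_filter.1 hx).2) ((Finset.mem_filter.1 hy).2) hxy
      _ = a p := Finset.card_range _
  -- Final case analysis on M
  rcases lt_trichotomy M n with hMn | hMn | hMn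
  · -- M < n : b M < a n, so hstar forces n small
    have hbMan : b M + 1 ≤ a n := nat_aux_blt hab hba hMn
    have ⟨hg1, hg2⟩ := nat_aux_grow ha hab hgrow n
    have han : 1 ≤ a n := ha n
    -- b n + 1 ≤ a n + 2r + (2r+1) * a n  and  b n > n * a n + a n
    have h1 : (2*r+1) * (b M + 1) ≤ (2*r+1) * a n := Nat.mul_le_mul_left _ hbMan
    have h2 : (4*r+3) * a n ≤ (n+1) * a n :=
      Nat.mul_le_mul_right _ (by omega)
    have h3 : (n+1) * a n = n * a n + a n := by ring
    have h4 : (4*r+3) * a n = (2*r+2) * a n + (2*r+1) * a n := by ring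
    have h5 : 2*r+1 ≤ (2*r+1) * a n := Nat.le_mul_of_pos_right _ han
    have h6 : (2*r+2) * a n = a n + (2*r+1) * a n := by ring
    generalize (2*r+1) * (b M + 1) = q1 at h1 hstar
    generalize (2*r+1) * a n = q2 at h1 h4 h5 h6
    generalize n * a n = q3 at hg1 hg2 h3
    generalize (n+1) * a n = q4 at h2 h3
    generalize (4*r+3) * a n = q5 at h2 h4
    generalize (2*r+2) * a n = q6 at h4 h6
    omega
  · exact hnW' (hMn ▸ hMW')
  · rcases Nat.lt_or_ge M p with hMp | hMp
    · -- n < M < p : M ∈ W ∩ W', contradicting size bound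
      have hMW : M ∈ W := hpmin M hMn hMp
      have : M ≤ c₀ := hc₀ ⟨hMW, hMW'⟩
      omega
    · -- M ≥ p : I_M is too long compared to a p
      have ⟨hg1, hg2⟩ := nat_aux_grow ha hab hgrow M
      have hap : a p ≤ a M := (nat_aux_amono hab hba).monotone hMp
      have happ : 1 ≤ a p := ha p
      have h0 : (2*r'+1) * Y'IM.card ≤ (2*r'+1) * a p := Nat.mul_le_mul_left _ hE
      have h1 : p * a p ≤ M * a M := Nat.mul_le_mul hMp hap
      have h2 : 2*r' ≤ 2*r' * a p := Nat.le_mul_of_pos_right _ happ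
      have h3 : 2*r' * a p + (2*r'+1) * a p = (4*r'+1) * a p := by ring
      have h4 : (4*r'+2) * a p ≤ p * a p := Nat.mul_le_mul_right _ (by omega)
      have h5 : (4*r'+2) * a p = (4*r'+1) * a p + a p := by ring
      generalize (2*r'+1) * Y'IM.card = q0 at h0 hD
      generalize (2*r'+1) * a p = q1 at h0 h3
      generalize M * a M = q2 at hg1 hg2 h1
      generalize p * a p = q3 at h1 h4
      generalize 2*r' * a p = q4 at h2 h3
      generalize (4*r'+1) * a p = q5 at h3 h5
      generalize (4*r'+2) * a p = q6 at h4 h5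
      omega
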